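/- Every hereditarily Lindelöf cellular-compact Hausdorff space is compact. -/

import Mathlib

open Set

def CellularCompact (X : Type*) [TopologicalSpace X] : Prop :=
  ∀ 𝒰 : Set (Set X), (∀ u ∈ 𝒰, IsOpen u ∧ u.Nonempty) → 𝒰.PairwiseDisjoint id →
    ∃ K : Set X, IsCompact K ∧ ∀ u ∈ 𝒰, (K ∩ u).Nonempty

section Aux

variable {X : Type*} [TopologicalSpace X]


noncomputable def histRec {R : Type*} (P : ∀ t : ℕ, (Fin t → R) → Prop)
    (base : P 0 (fun s => s.elim0))
    (step : ∀ t h, P t h → ∃ rec : R, P (t+1) (Fin.snoc h rec)) :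
    ∀ t, {h : Fin t → R // P t h} :=
  fun t => Nat.rec ⟨fun s => s.elim0, base⟩
    (fun t' prev => ⟨Fin.snoc prev.1 (Classical.choose (step t' prev.1 prev.2)),
      Classical.choose_spec (step t' prev.1 prev.2)⟩) t

lemma histRec_succ {R : Type*} (P : ∀ t : ℕ, (Fin t → R) → Prop)
    (base : P 0 (fun s => s.elim0))
    (step : ∀ t h, P t h → ∃ rec : R, P (t+1) (Fin.snoc h rec)) (t : ℕ) :
    (histRec P base step (t+1)).1 =
      Fin.snoc (histRec P base step t).1
        (Classical.choose (step t (histRec P base step t).1 (histRec P base step t).2)) := rfl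

noncomputable def histFun {R : Type*} (P : ∀ t : ℕ, (Fin t → R) → Prop)
    (base : P 0 (fun s => s.elim0))
    (step : ∀ t h, P t h → ∃ rec : R, P (t+1) (Fin.snoc h rec)) : ℕ → R :=
  fun t => (histRec P base step (t+1)).1 (Fin.last t)

lemma histRec_eq_histFun {R : Type*} (P : ∀ t : ℕ, (Fin t → R) → Prop)
    (base : P 0 (fun s => s.elim0))
    (step : ∀ t h, P t h → ∃ rec : R, P (t+1) (Fin.snoc h rec)) :
    ∀ t (s : Fin t), (histRec P base step t).1 s = histFun P base step s.1 := by
  intro t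
  induction t with
  | zero => exact fun s => s.elim0
  | succ t ih =>
    intro s
    cases s using Fin.lastCases with
    | last => simp only [histFun, Fin.val_last]
    | cast s =>
      rw [histRec_succ, Fin.snoc_castSucc, ih s]
      simp only [Fin.coe_castSucc]

lemma histFun_inv {R : Type*} (P : ∀ t : ℕ, (Fin t → R) → Prop)
    (base : P 0 (fun s => s.elim0))
    (step : ∀ t h, P t h → ∃ rec : R, P (t+1) (Fin.snoc h rec)) (t : ℕ) :
    P t (fun s : Fin t => histFun P base step s.1) := by
  have : (fun s : Fin t => histFun P base step s.1) = (histRec P base step t).1 := by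
    funext s
    rw [histRec_eq_histFun]
  rw [this]
  exact (histRec P base step t).2

lemma open_infinite_aux [T1Space X] (O : Set X) (q : X) (hOo : IsOpen O) (hqO : q ∈ O)
    (hiso : ¬ IsOpen ({q} : Set X)) : O.Infinite := by
  classical
  by_contra hfin
  rw [Set.not_infinite] at hfin
  apply hiso
  have h1 : IsClosed (O \ {q}) := (hfin.subset diff_subset).isClosed
  have h2 : IsOpen (O ∩ (O \ {q})ᶜ) := hOo.inter h1.isOpen_compl
  have h3 : O ∩ (O \ {q})ᶜ = {q} := by
    ext x
    simp only [mem_inter_iff, mem_compl_iff, mem_diff, mem_singleton_iff, not_and, not_not]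
    constructor
    · rintro ⟨hxO, hx⟩; exact hx hxO
    · rintro rfl; exact ⟨hqO, fun _ => rfl⟩
  rwa [h3] at h2

section Clean

variable (W : ℕ → Set X) (BB : X → ℕ → Set X)

/-- Invariant for the diagonal construction in the "clean" case. -/

lemma exists_closed_pseudobase [T2Space X] [HereditarilyLindelofSpace X] (x : X) :
    ∃ B : ℕ → Set X, (∀ n, IsOpen (B n)) ∧ (∀ n, x ∈ B n) ∧ (Antitone B) ∧
      (⋂ n, closure (B n)) ⊆ {x} := by
  classical
  have hsep : ∀ y : ({x}ᶜ : Set X), ∃ u v : Set X,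
      IsOpen u ∧ IsOpen v ∧ (y : X) ∈ u ∧ x ∈ v ∧ Disjoint u v := by
    rintro ⟨y, hy⟩
    have hxy : y ≠ x := by simpa using hy
    obtain ⟨u, v, hu, hv, hyu, hxv, huv⟩ := t2_separation hxy
    exact ⟨u, v, hu, hv, hyu, hxv, huv⟩
  choose u v hu hv hyu hxv huv using hsep
  have hL : IsLindelof ({x}ᶜ : Set X) := HereditarilyLindelof_LindelofSets _
  have hcov : ({x}ᶜ : Set X) ⊆ ⋃ i : ({x}ᶜ : Set X), u i := fun y hy =>
    mem_iUnion.mpr ⟨⟨y, hy⟩, hyu ⟨y, hy⟩⟩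
  obtain ⟨r, hrc, hrcov⟩ := hL.elim_countable_subcover _ hu hcov
  rcases r.eq_empty_or_nonempty with hre | hrne
  · -- then {x}ᶜ = ∅, so X = {x}
    refine ⟨fun _ => univ, fun _ => isOpen_univ, fun _ => mem_univ x,
      fun _ _ _ => le_rfl, ?_⟩
    intro z _
    by_contra hz
    have : z ∈ ({x}ᶜ : Set X) := hz
    have := hrcov this
    simp [hre] at this
  · obtain ⟨f, hf⟩ := hrc.exists_eq_range hrne
    refine ⟨fun n => ⋂ k ∈ Finset.range (n+1), v (f k), ?_, ?_, ?_, ?_⟩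
    · intro n; exact isOpen_biInter_finset fun k _ => hv _
    · intro n; exact mem_biInter fun k _ => hxv _
    · intro a b hab
      exact biInter_subset_biInter_left (fun k hk => Finset.mem_range.mpr
        (lt_of_lt_of_le (Finset.mem_range.mp hk) (by omega)))
    · intro z hz
      by_contra hzx
      have hzS : z ∈ ({x}ᶜ : Set X) := hzx
      obtain ⟨i, hi, hzi⟩ := mem_iUnion₂.mp (hrcov hzS)
      obtain ⟨k, hk⟩ : ∃ k, f k = i := by rw [hf] at hi; exact hi
      have hsubv : (⋂ j ∈ Finset.range (k+1), v (f j)) ⊆ v (f k) :=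
        biInter_subset_of_mem (Finset.self_mem_range_succ k)
      have hdisj : Disjoint (u i) (⋂ j ∈ Finset.range (k+1), v (f j)) := by
        rw [← hk]
        exact (huv (f k)).mono_right hsubv
      have hznc : z ∉ closure (⋂ j ∈ Finset.range (k+1), v (f j)) := by
        intro hcl
        have := mem_closure_iff.mp hcl (u i) (hu i) hzi
        exact this.not_disjoint (hdisj.mono le_rfl le_rfl)
      exact hznc (mem_iInter.mp hz k)

lemma exists_bad_cover [HereditarilyLindelofSpace X] (h : ¬ IsCompact (univ : Set X)) :
    ∃ W : ℕ → Set X, (∀ n, IsOpen (W n)) ∧ Monotone W ∧ (⋃ n, W n) = univ ∧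
      ∀ n, W n ≠ univ := by
  classical
  have H : ¬ ∀ (ι : Type _) (U : ι → Set X), (∀ i, IsOpen (U i)) → (univ : Set X) ⊆ ⋃ i, U i →
      ∃ t : Finset ι, (univ : Set X) ⊆ ⋃ i ∈ t, U i := by
    intro hall
    exact h (isCompact_iff_finite_subcover.mpr fun {ι} U h1 h2 => hall ι U h1 h2)
  push_neg at H
  obtain ⟨ι, U, hUo, hUc, hUnf⟩ := H
  have hL : IsLindelof (univ : Set X) := isLindelof_univ
  obtain ⟨r, hrc, hrcov⟩ := hL.elim_countable_subcover U hUo hUc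
  have hrne : r.Nonempty := by
    rcases r.eq_empty_or_nonempty with hre | hrne
    · exfalso
      apply h
      have : (univ : Set X) = ∅ := by
        have := hrcov
        simp [hre] at this
        simpa using this
      rw [this]; exact isCompact_empty
    · exact hrne
  obtain ⟨f, hf⟩ := hrc.exists_eq_range hrne
  refine ⟨Set.accumulate (fun n => U (f n)), ?_, monotone_accumulate, ?_, ?_⟩
  · intro n
    rw [Set.accumulate_def]
    exact isOpen_biUnion fun k _ => hUo _
  · rw [Set.iUnion_accumulate]
    apply eq_univ_of_univ_subset
    intro z hz
    obtain ⟨i, hi, hzi⟩ := mem_iUnion₂.mp (hrcov hz)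
    obtain ⟨k, hk⟩ : ∃ k, f k = i := by rw [hf] at hi; exact hi
    exact mem_iUnion.mpr ⟨k, by rw [hk]; exact hzi⟩
  · intro n hn
    apply hUnf ((Finset.range (n+1)).image f)
    intro z _
    have hz : z ∈ Set.accumulate (fun n => U (f n)) n := by rw [hn]; trivial
    rw [Set.accumulate_def] at hz
    obtain ⟨k, hk, hzk⟩ := mem_iUnion₂.mp hz
    exact mem_iUnion₂.mpr ⟨f k, Finset.mem_image.mpr ⟨k, Finset.mem_range.mpr (by omega), rfl⟩, hzk⟩

lemma endgame [T2Space X] (hcc : CellularCompact X)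
    (W : ℕ → Set X) (hWo : ∀ n, IsOpen (W n)) (hWmono : Monotone W)
    (hWcover : (⋃ n, W n) = univ)
    (q : ℕ → X) (hq : ∀ j, q j ∉ W j)
    (D : ℕ → ℕ → Set X) (hDanti : ∀ j, Antitone (D j))
    (hDq : ∀ j, (⋂ r, closure (D j r)) ⊆ {q j})
    (m : ℕ → ℕ → Set X) (hmo : ∀ j r, IsOpen (m j r)) (hmn : ∀ j r, (m j r).Nonempty)
    (hms : ∀ j r, m j r ⊆ D j r)
    (hdisj : ∀ j r j' r', m j r ≠ m j' r' → Disjoint (m j r) (m j' r')) : False := by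
  classical
  set 𝒰 : Set (Set X) := {s | ∃ j r, m j r = s} with h𝒰
  obtain ⟨K, hKc, hKmeet⟩ := hcc 𝒰
    (by rintro u ⟨j, r, rfl⟩; exact ⟨hmo j r, hmn j r⟩)
    (by
      rintro u ⟨j, r, rfl⟩ u' ⟨j', r', rfl⟩ hne
      exact hdisj j r j' r' hne)
  have hqK : ∀ j, q j ∈ K := by
    intro j
    have hne : ∀ r, (K ∩ closure (D j r)).Nonempty := by
      intro r
      obtain ⟨x, hxK, hxm⟩ := hKmeet (m j r) ⟨j, r, rfl⟩
      exact ⟨x, hxK, subset_closure (hms j r hxm)⟩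
    have hnest : ∀ r, K ∩ closure (D j (r+1)) ⊆ K ∩ closure (D j r) :=
      fun r => inter_subset_inter_right _ (closure_mono (hDanti j (by omega)))
    have hcl : ∀ r, IsClosed (K ∩ closure (D j r)) :=
      fun r => hKc.isClosed.inter isClosed_closure
    have h0 : IsCompact (K ∩ closure (D j 0)) := hKc.inter_right isClosed_closure
    obtain ⟨x, hx⟩ := IsCompact.nonempty_iInter_of_sequence_nonempty_isCompact_isClosed
      (fun r => K ∩ closure (D j r)) hnest hne h0 hcl
    have hxK : x ∈ K := (mem_iInter.mp hx 0).1
    have hxq : x ∈ ({q j} : Set X) := hDq j (mem_iInter.mpr fun r => (mem_iInter.mp hx r).2)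
    rw [mem_singleton_iff] at hxq
    rwa [← hxq]
  obtain ⟨t, ht⟩ := hKc.elim_finite_subcover W hWo (by rw [hWcover]; exact subset_univ K)
  set N := t.sup id with hN
  have hKW : K ⊆ W N := by
    refine ht.trans ?_
    refine iUnion₂_subset fun n hn => hWmono ?_
    exact Finset.le_sup (f := id) hn
  exact hq N (hKW (hqK N))

def CleanInv (W : ℕ → Set X) (BB : X → ℕ → Set X) (t : ℕ)
    (h : Fin t → Set X × ℕ × X) : Prop :=
  (∀ s, IsOpen (h s).1 ∧ (h s).1.Nonempty) ∧
  (∀ s, (h s).1 ⊆ BB (h s).2.2 (Nat.unpair s.1).2) ∧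
  (∀ s s', (Nat.unpair s.1).1 = (Nat.unpair s'.1).1 → (h s).2.2 = (h s').2.2) ∧
  (∀ s, closure (h s).1 ∩ (W (h s).2.1)ᶜ = ∅) ∧
  (∀ s s', (Nat.unpair s.1).1 ≠ (Nat.unpair s'.1).1 → (h s).2.2 ∉ closure (h s').1) ∧
  (∀ s, (h s).2.2 ∈ (W (Nat.unpair s.1).1)ᶜ) ∧
  (∀ s s', s ≠ s' → (h s).1 = (h s').1 ∨ Disjoint (h s).1 (h s').1) ∧
  (∀ s, (h s).1 = {(h s).2.2} ∨ (h s).2.2 ∉ closure (h s).1) ∧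
  (∀ s s', (Nat.unpair s.1).1 ≠ (Nat.unpair s'.1).1 → (h s).2.2 ≠ (h s').2.2)

lemma clean_step [T2Space X]
    (W : ℕ → Set X) (BB : X → ℕ → Set X)
    (hWmono : Monotone W) (hWmem : ∀ x : X, ∃ n, x ∈ W n)
    (hFne : ∀ n, ((W n)ᶜ : Set X).Nonempty)
    (hBBo : ∀ x n, IsOpen (BB x n)) (hBBx : ∀ x n, x ∈ BB x n)
    (hclean : ∀ A : Set X, IsOpen A → A.Nonempty →
      ∃ V M, IsOpen V ∧ V.Nonempty ∧ V ⊆ A ∧ closure V ∩ (W M)ᶜ = ∅)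
    (t : ℕ) (h : Fin t → Set X × ℕ × X) (hinv : CleanInv W BB t h) :
    ∃ rec : Set X × ℕ × X, CleanInv W BB (t+1) (Fin.snoc h rec) := by
  classical
  obtain ⟨I1, I2, I3, I4, I5, I6, I7, I8, I9⟩ := hinv
  set j := (Nat.unpair t).1 with hj
  set r := (Nat.unpair t).2 with hr
  -- choose the target point q of this block
  obtain ⟨q, hq1, hq2, hq3a, hq3b, hq4⟩ :
      ∃ q : X, q ∈ (W j)ᶜ ∧
        (∀ s : Fin t, (Nat.unpair s.1).1 ≠ j → q ∉ closure (h s).1) ∧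
        (∀ s : Fin t, (Nat.unpair s.1).1 = j → ((h s).1 = {q} ∨ q ∉ closure (h s).1)) ∧
        (∀ s : Fin t, (Nat.unpair s.1).1 = j → (h s).2.2 = q) ∧
        (∀ s : Fin t, (Nat.unpair s.1).1 ≠ j → (h s).2.2 ≠ q) := by
    rcases em (∃ s₀ : Fin t, (Nat.unpair s₀.1).1 = j) with ⟨s₀, hs₀⟩ | hno
    · refine ⟨(h s₀).2.2, ?_, ?_, ?_, ?_, ?_⟩
      · have := I6 s₀; rwa [hs₀] at this
      · intro s hs
        exact I5 s₀ s (by rw [hs₀]; exact fun hh => hs hh.symm)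
      · intro s hs
        have hQ : (h s).2.2 = (h s₀).2.2 := I3 s s₀ (hs.trans hs₀.symm)
        rcases I8 s with hc | hc
        · left; rw [hc, hQ]
        · right; rwa [← hQ]
      · intro s hs; exact I3 s s₀ (hs.trans hs₀.symm)
      · intro s hs
        exact I9 s s₀ (by rw [hs₀]; exact hs)
    · -- fresh block: pick a deep point
      choose wIdx hwIdx using fun s : Fin t => hWmem ((h s).2.2)
      set d := max j ((Finset.univ : Finset (Fin t)).sup
        (fun s => max ((h s).2.1) (wIdx s))) with hd
      obtain ⟨q, hq⟩ := hFne d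
      have hsub : ∀ n ≤ d, q ∉ W n := fun n hn hmem => hq (hWmono hn hmem)
      refine ⟨q, hsub j (le_max_left _ _), ?_, ?_, ?_, ?_⟩
      · intro s _
        have hMs : (h s).2.1 ≤ d := by
          have h1 : max ((h s).2.1) (wIdx s) ≤ (Finset.univ : Finset (Fin t)).sup
              (fun s => max ((h s).2.1) (wIdx s)) :=
            Finset.le_sup (f := fun s : Fin t => max ((h s).2.1) (wIdx s))
              (Finset.mem_univ s)
          exact le_trans (le_trans (le_max_left _ _) h1) (le_max_right _ _)
        intro hcl
        have : q ∈ closure (h s).1 ∩ (W ((h s).2.1))ᶜ := ⟨hcl, hsub _ hMs⟩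
        rw [I4 s] at this
        exact this
      · intro s hs; exact absurd ⟨s, hs⟩ hno
      · intro s hs; exact absurd ⟨s, hs⟩ hno
      · intro s _
        intro he
        have hws : wIdx s ≤ d := by
          have h1 : max ((h s).2.1) (wIdx s) ≤ (Finset.univ : Finset (Fin t)).sup
              (fun s => max ((h s).2.1) (wIdx s)) :=
            Finset.le_sup (f := fun s : Fin t => max ((h s).2.1) (wIdx s))
              (Finset.mem_univ s)
          exact le_trans (le_trans (le_max_right _ _) h1) (le_max_right _ _)
        exact hsub _ hws (he ▸ hwIdx s)
  -- q is never in the closure of an existing member, unless that member is {q}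
  -- construct the new member
  by_cases hiso : IsOpen ({q} : Set X)
  · -- isolated point: use the singleton itself
    obtain ⟨Mq, hMq⟩ := hWmem q
    refine ⟨({q}, Mq, q), ?_, ?_, ?_, ?_, ?_, ?_, ?_, ?_, ?_⟩
    · intro s
      cases s using Fin.lastCases with
      | last => simp only [Fin.snoc_last]; exact ⟨hiso, singleton_nonempty q⟩
      | cast s => simp only [Fin.snoc_castSucc]; exact I1 s
    · intro s
      cases s using Fin.lastCases with
      | last =>
        simp only [Fin.snoc_last, Fin.val_last]
        exact singleton_subset_iff.mpr (hBBx q _)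
      | cast s => simp only [Fin.snoc_castSucc, Fin.coe_castSucc]; exact I2 s
    · intro s s'
      cases s using Fin.lastCases with
      | last =>
        cases s' using Fin.lastCases with
        | last => intro _; rfl
        | cast s' =>
          simp only [Fin.snoc_last, Fin.snoc_castSucc, Fin.val_last, Fin.coe_castSucc]
          intro he; exact (hq3b s' he.symm).symm
      | cast s =>
        cases s' using Fin.lastCases with
        | last =>
          simp only [Fin.snoc_last, Fin.snoc_castSucc, Fin.val_last, Fin.coe_castSucc]
          intro he; exact hq3b s he
        | cast s' =>
          simp only [Fin.snoc_castSucc, Fin.coe_castSucc]; exact I3 s s'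
    · intro s
      cases s using Fin.lastCases with
      | last =>
        simp only [Fin.snoc_last]
        rw [closure_singleton]
        ext x
        simp only [mem_inter_iff, mem_singleton_iff, mem_compl_iff, mem_empty_iff_false,
          iff_false, not_and]
        rintro rfl h2; exact h2 hMq
      | cast s => simp only [Fin.snoc_castSucc]; exact I4 s
    · intro s s'
      cases s using Fin.lastCases with
      | last =>
        cases s' using Fin.lastCases with
        | last => intro he; exact absurd rfl he
        | cast s' =>
          simp only [Fin.snoc_last, Fin.snoc_castSucc, Fin.val_last, Fin.coe_castSucc]
          intro hne; exact hq2 s' (fun hh => hne hh.symm)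
      | cast s =>
        cases s' using Fin.lastCases with
        | last =>
          simp only [Fin.snoc_last, Fin.snoc_castSucc, Fin.val_last, Fin.coe_castSucc]
          intro hne
          rw [closure_singleton, mem_singleton_iff]
          exact hq4 s hne
        | cast s' =>
          simp only [Fin.snoc_castSucc, Fin.coe_castSucc]; exact I5 s s'
    · intro s
      cases s using Fin.lastCases with
      | last => simp only [Fin.snoc_last, Fin.val_last]; exact hq1
      | cast s => simp only [Fin.snoc_castSucc, Fin.coe_castSucc]; exact I6 s
    · intro s s'
      cases s using Fin.lastCases with
      | last =>
        cases s' using Fin.lastCases with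
        | last => intro he; exact absurd rfl he
        | cast s' =>
          simp only [Fin.snoc_last, Fin.snoc_castSucc, Fin.val_last, Fin.coe_castSucc]
          intro _
          rcases em ((Nat.unpair s'.1).1 = j) with hsj | hsj
          · rcases hq3a s' hsj with hc | hc
            · left; rw [hc]
            · right
              exact (disjoint_singleton_left).mpr (fun hm => hc (subset_closure hm))
          · right
            exact (disjoint_singleton_left).mpr (fun hm => hq2 s' hsj (subset_closure hm))
      | cast s =>
        cases s' using Fin.lastCases with
        | last =>
          simp only [Fin.snoc_last, Fin.snoc_castSucc, Fin.val_last, Fin.coe_castSucc]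
          intro _
          rcases em ((Nat.unpair s.1).1 = j) with hsj | hsj
          · rcases hq3a s hsj with hc | hc
            · left; rw [hc]
            · right
              exact (disjoint_singleton_right).mpr (fun hm => hc (subset_closure hm))
          · right
            exact (disjoint_singleton_right).mpr (fun hm => hq2 s hsj (subset_closure hm))
        | cast s' =>
          simp only [Fin.snoc_castSucc]
          intro hne
          exact I7 s s' (fun he => hne (by rw [he]))
    · intro s
      cases s using Fin.lastCases with
      | last => left; simp only [Fin.snoc_last]
      | cast s => simp only [Fin.snoc_castSucc]; exact I8 s
    · intro s s'
      cases s using Fin.lastCases with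
      | last =>
        cases s' using Fin.lastCases with
        | last => intro he; exact absurd rfl he
        | cast s' =>
          simp only [Fin.snoc_last, Fin.snoc_castSucc, Fin.val_last, Fin.coe_castSucc]
          intro hne; exact fun he => hq4 s' (fun hh => hne hh.symm) he.symm
      | cast s =>
        cases s' using Fin.lastCases with
        | last =>
          simp only [Fin.snoc_last, Fin.snoc_castSucc, Fin.val_last, Fin.coe_castSucc]
          intro hne; exact hq4 s hne
        | cast s' =>
          simp only [Fin.snoc_castSucc, Fin.coe_castSucc]; exact I9 s s'
  · -- q not isolated: shrink a region and take a clean subset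
    have hqnotincl : ∀ s : Fin t, q ∉ closure (h s).1 := by
      intro s
      rcases em ((Nat.unpair s.1).1 = j) with hsj | hsj
      · rcases hq3a s hsj with hc | hc
        · exfalso
          have := (I1 s).1
          rw [hc] at this
          exact hiso this
        · exact hc
      · exact hq2 s hsj
    set region := BB q r ∩ ⋂ s : Fin t, (closure (h s).1)ᶜ with hregion
    have hrego : IsOpen region :=
      (hBBo q r).inter (isOpen_iInter_of_finite fun s => isClosed_closure.isOpen_compl)
    have hqreg : q ∈ region :=
      ⟨hBBx q r, mem_iInter.mpr fun s => hqnotincl s⟩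
    have hreginf : region.Infinite := open_infinite_aux region q hrego hqreg hiso
    set P : Finset X := insert q ((Finset.univ : Finset (Fin t)).image fun s => (h s).2.2)
      with hP
    obtain ⟨z, hzreg, hzP⟩ := hreginf.exists_notMem_finset P
    have hzq : z ≠ q := fun e => hzP (by rw [e, hP]; exact Finset.mem_insert_self _ _)
    have hzQ : ∀ s : Fin t, z ≠ (h s).2.2 := fun s e => hzP (by
      rw [hP]
      exact Finset.mem_insert.mpr (Or.inr (Finset.mem_image.mpr ⟨s, Finset.mem_univ s, e.symm⟩)))
    obtain ⟨Z₀, Y₀, hZ₀o, hY₀o, hzZ₀, hqY₀, hZY₀⟩ := t2_separation hzq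
    have hsepQ : ∀ s : Fin t, ∃ p : Set X × Set X, IsOpen p.1 ∧ IsOpen p.2 ∧ z ∈ p.1 ∧
        (h s).2.2 ∈ p.2 ∧ Disjoint p.1 p.2 := by
      intro s
      obtain ⟨a, b, hao, hbo, hza, hQb, hab⟩ := t2_separation (hzQ s)
      exact ⟨(a, b), hao, hbo, hza, hQb, hab⟩
    choose sep hsep1 hsep2 hsep3 hsep4 hsep5 using hsepQ
    set A := (region ∩ Z₀) ∩ ⋂ s : Fin t, (sep s).1 with hA
    have hAo : IsOpen A :=
      ((hrego.inter hZ₀o).inter (isOpen_iInter_of_finite fun s => hsep1 s))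
    have hzA : z ∈ A := ⟨⟨hzreg, hzZ₀⟩, mem_iInter.mpr fun s => hsep3 s⟩
    have hAq : q ∉ closure A := by
      intro hcl
      obtain ⟨y, hy1, hy2⟩ := mem_closure_iff.mp hcl Y₀ hY₀o hqY₀
      exact (hZY₀.ne_of_mem hy2.1.2 hy1) rfl
    have hAQ : ∀ s : Fin t, (h s).2.2 ∉ closure A := by
      intro s hcl
      obtain ⟨y, hy1, hy2⟩ := mem_closure_iff.mp hcl (sep s).2 (hsep2 s) (hsep4 s)
      exact ((hsep5 s).ne_of_mem (mem_iInter.mp hy2.2 s) hy1) rfl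
    obtain ⟨V, M, hVo, hVn, hVA, hVM⟩ := hclean A hAo ⟨z, hzA⟩
    have hVreg : V ⊆ region := hVA.trans ((inter_subset_left).trans inter_subset_left)
    have hqnV : q ∉ closure V := fun hc => hAq (closure_mono hVA hc)
    have hQnV : ∀ s : Fin t, (h s).2.2 ∉ closure V := fun s hc => hAQ s (closure_mono hVA hc)
    have hVdisj : ∀ s : Fin t, Disjoint V (h s).1 := by
      intro s
      have : V ⊆ (closure (h s).1)ᶜ :=
        hVreg.trans ((inter_subset_right).trans (iInter_subset _ s))
      exact (disjoint_compl_left.mono_right subset_closure).mono_left this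
    refine ⟨(V, M, q), ?_, ?_, ?_, ?_, ?_, ?_, ?_, ?_, ?_⟩
    · intro s
      cases s using Fin.lastCases with
      | last => simp only [Fin.snoc_last]; exact ⟨hVo, hVn⟩
      | cast s => simp only [Fin.snoc_castSucc]; exact I1 s
    · intro s
      cases s using Fin.lastCases with
      | last =>
        simp only [Fin.snoc_last, Fin.val_last]
        exact hVreg.trans inter_subset_left
      | cast s => simp only [Fin.snoc_castSucc, Fin.coe_castSucc]; exact I2 s
    · intro s s'
      cases s using Fin.lastCases with
      | last =>
        cases s' using Fin.lastCases with
        | last => intro _; rfl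
        | cast s' =>
          simp only [Fin.snoc_last, Fin.snoc_castSucc, Fin.val_last, Fin.coe_castSucc]
          intro he; exact (hq3b s' he.symm).symm
      | cast s =>
        cases s' using Fin.lastCases with
        | last =>
          simp only [Fin.snoc_last, Fin.snoc_castSucc, Fin.val_last, Fin.coe_castSucc]
          intro he; exact hq3b s he
        | cast s' =>
          simp only [Fin.snoc_castSucc, Fin.coe_castSucc]; exact I3 s s'
    · intro s
      cases s using Fin.lastCases with
      | last => simp only [Fin.snoc_last]; exact hVM
      | cast s => simp only [Fin.snoc_castSucc]; exact I4 s
    · intro s s'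
      cases s using Fin.lastCases with
      | last =>
        cases s' using Fin.lastCases with
        | last => intro he; exact absurd rfl he
        | cast s' =>
          simp only [Fin.snoc_last, Fin.snoc_castSucc, Fin.val_last, Fin.coe_castSucc]
          intro hne; exact hq2 s' (fun hh => hne hh.symm)
      | cast s =>
        cases s' using Fin.lastCases with
        | last =>
          simp only [Fin.snoc_last, Fin.snoc_castSucc, Fin.val_last, Fin.coe_castSucc]
          intro _; exact hQnV s
        | cast s' =>
          simp only [Fin.snoc_castSucc, Fin.coe_castSucc]; exact I5 s s'
    · intro s
      cases s using Fin.lastCases with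
      | last => simp only [Fin.snoc_last, Fin.val_last]; exact hq1
      | cast s => simp only [Fin.snoc_castSucc, Fin.coe_castSucc]; exact I6 s
    · intro s s'
      cases s using Fin.lastCases with
      | last =>
        cases s' using Fin.lastCases with
        | last => intro he; exact absurd rfl he
        | cast s' =>
          simp only [Fin.snoc_last, Fin.snoc_castSucc]
          intro _; right; exact hVdisj s'
      | cast s =>
        cases s' using Fin.lastCases with
        | last =>
          simp only [Fin.snoc_last, Fin.snoc_castSucc]
          intro _; right; exact (hVdisj s).symm
        | cast s' =>
          simp only [Fin.snoc_castSucc]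
          intro hne
          exact I7 s s' (fun he => hne (by rw [he]))
    · intro s
      cases s using Fin.lastCases with
      | last => simp only [Fin.snoc_last]; right; exact hqnV
      | cast s => simp only [Fin.snoc_castSucc]; exact I8 s
    · intro s s'
      cases s using Fin.lastCases with
      | last =>
        cases s' using Fin.lastCases with
        | last => intro he; exact absurd rfl he
        | cast s' =>
          simp only [Fin.snoc_last, Fin.snoc_castSucc, Fin.val_last, Fin.coe_castSucc]
          intro hne; exact fun he => hq4 s' (fun hh => hne hh.symm) he.symm
      | cast s =>
        cases s' using Fin.lastCases with
        | last =>
          simp only [Fin.snoc_last, Fin.snoc_castSucc, Fin.val_last, Fin.coe_castSucc]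
          intro hne; exact hq4 s hne
        | cast s' =>
          simp only [Fin.snoc_castSucc, Fin.coe_castSucc]; exact I9 s s'

end Clean

lemma clean_case [T2Space X] (hcc : CellularCompact X)
    (W : ℕ → Set X) (hWo : ∀ n, IsOpen (W n)) (hWmono : Monotone W)
    (hWcover : (⋃ n, W n) = univ) (hWne : ∀ n, W n ≠ univ)
    (BB : X → ℕ → Set X) (hBBo : ∀ x n, IsOpen (BB x n)) (hBBx : ∀ x n, x ∈ BB x n)
    (hBBanti : ∀ x, Antitone (BB x)) (hBBsub : ∀ x, (⋂ n, closure (BB x n)) ⊆ {x})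
    (hclean : ∀ A : Set X, IsOpen A → A.Nonempty →
      ∃ V M, IsOpen V ∧ V.Nonempty ∧ V ⊆ A ∧ closure V ∩ (W M)ᶜ = ∅) : False := by
  classical
  have hWmem : ∀ x : X, ∃ n, x ∈ W n := by
    intro x
    have : x ∈ ⋃ n, W n := by rw [hWcover]; trivial
    exact mem_iUnion.mp this
  have hFne : ∀ n, ((W n)ᶜ : Set X).Nonempty := fun n => nonempty_compl.mpr (hWne n)
  have base : CleanInv W BB 0 (fun s => s.elim0) :=
    ⟨fun s => s.elim0, fun s => s.elim0, fun s => s.elim0, fun s => s.elim0,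
     fun s => s.elim0, fun s => s.elim0, fun s => s.elim0, fun s => s.elim0,
     fun s => s.elim0⟩
  set step := clean_step W BB hWmono hWmem hFne hBBo hBBx hclean with hstep
  set HV : ℕ → Set X × ℕ × X := histFun (CleanInv W BB) base step with hHV
  have G : ∀ t, CleanInv W BB t (fun s : Fin t => HV s.1) :=
    fun t => histFun_inv (CleanInv W BB) base step t
  -- global single-index facts
  have G1 : ∀ n : ℕ, IsOpen (HV n).1 ∧ (HV n).1.Nonempty :=
    fun n => (G (n+1)).1 ⟨n, n.lt_succ_self⟩
  have G2 : ∀ n : ℕ, (HV n).1 ⊆ BB (HV n).2.2 (Nat.unpair n).2 :=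
    fun n => (G (n+1)).2.1 ⟨n, n.lt_succ_self⟩
  have G6 : ∀ n : ℕ, (HV n).2.2 ∈ (W (Nat.unpair n).1)ᶜ :=
    fun n => (G (n+1)).2.2.2.2.2.1 ⟨n, n.lt_succ_self⟩
  -- global pairwise facts
  have G3 : ∀ a b : ℕ, (Nat.unpair a).1 = (Nat.unpair b).1 → (HV a).2.2 = (HV b).2.2 := by
    intro a b hab
    have := (G (max a b + 1)).2.2.1 ⟨a, by omega⟩ ⟨b, by omega⟩
    exact this hab
  have G7 : ∀ a b : ℕ, a ≠ b → (HV a).1 = (HV b).1 ∨ Disjoint (HV a).1 (HV b).1 := by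
    intro a b hab
    have := (G (max a b + 1)).2.2.2.2.2.2.1 ⟨a, by omega⟩ ⟨b, by omega⟩
    exact this (fun he => hab (by simpa using congrArg Fin.val he))
  -- assemble endgame data
  set q : ℕ → X := fun j => (HV (Nat.pair j 0)).2.2 with hqdef
  set m : ℕ → ℕ → Set X := fun j r => (HV (Nat.pair j r)).1 with hmdef
  refine endgame hcc W hWo hWmono hWcover q ?_ (fun j => BB (q j)) (fun j => hBBanti (q j))
    (fun j => hBBsub (q j)) m ?_ ?_ ?_ ?_
  · intro j
    have := G6 (Nat.pair j 0)
    rw [Nat.unpair_pair] at this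
    exact this
  · intro j r; exact (G1 (Nat.pair j r)).1
  · intro j r; exact (G1 (Nat.pair j r)).2
  · intro j r
    have h2 := G2 (Nat.pair j r)
    rw [Nat.unpair_pair] at h2
    have h3 : (HV (Nat.pair j r)).2.2 = q j := by
      apply G3
      rw [Nat.unpair_pair, Nat.unpair_pair]
    rw [h3] at h2
    exact h2
  · intro a b a' b' hne
    have hab : Nat.pair a b ≠ Nat.pair a' b' := by
      intro he
      apply hne
      show (HV (Nat.pair a b)).1 = (HV (Nat.pair a' b')).1
      rw [he]
    rcases G7 _ _ hab with he | hd
    · exact absurd he hne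
    · exact hd

lemma wild_case [T2Space X] [HereditarilyLindelofSpace X] (hcc : CellularCompact X)
    (W : ℕ → Set X) (hWo : ∀ n, IsOpen (W n)) (hWmono : Monotone W)
    (hWcover : (⋃ n, W n) = univ)
    (BB : X → ℕ → Set X) (hBBo : ∀ x n, IsOpen (BB x n)) (hBBx : ∀ x n, x ∈ BB x n)
    (hBBanti : ∀ x, Antitone (BB x)) (hBBsub : ∀ x, (⋂ n, closure (BB x n)) ⊆ {x})
    (A₀ : Set X) (hA₀o : IsOpen A₀) (hA₀n : A₀.Nonempty)
    (hwild : ∀ V, IsOpen V → V.Nonempty → V ⊆ A₀ → ∀ M, (closure V ∩ (W M)ᶜ).Nonempty) :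
    False := by
  classical
  -- every point is in some W n
  have hWmem : ∀ x : X, ∃ n, x ∈ W n := by
    intro x
    have : x ∈ ⋃ n, W n := by rw [hWcover]; trivial
    exact mem_iUnion.mp this
  -- no nonempty open subset of A₀ is a singleton
  have htwo : ∀ O : Set X, IsOpen O → O.Nonempty → O ⊆ A₀ → ∀ z ∈ O, ∃ z' ∈ O, z' ≠ z := by
    intro O hOo hOn hOA z hz
    by_contra hone
    push_neg at hone
    have hOz : O = {z} := by
      apply Subset.antisymm
      · intro w hw
        exact mem_singleton_iff.mpr (hone w hw)
      · intro w hw; rwa [mem_singleton_iff.mp hw]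
    obtain ⟨M, hM⟩ := hWmem z
    obtain ⟨y, hy1, hy2⟩ := hwild O hOo hOn hOA M
    rw [hOz, closure_singleton] at hy1
    rw [mem_singleton_iff.mp hy1] at hy2
    exact hy2 hM
  -- split chain inside A₀
  have hsplit : ∀ O : {O : Set X // IsOpen O ∧ O.Nonempty ∧ O ⊆ A₀},
      ∃ p : Set X × Set X, IsOpen p.1 ∧ p.1.Nonempty ∧ p.1 ⊆ O.1 ∧
        IsOpen p.2 ∧ p.2.Nonempty ∧ p.2 ⊆ O.1 ∧ Disjoint p.1 p.2 := by
    rintro ⟨O, hOo, hOn, hOA⟩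
    obtain ⟨z, hz⟩ := hOn
    obtain ⟨z', hz', hz'z⟩ := htwo O hOo ⟨z, hz⟩ hOA z hz
    obtain ⟨U1, U2, hU1, hU2, hzU1, hzU2, hU12⟩ := t2_separation hz'z
    exact ⟨(O ∩ U1, O ∩ U2), hOo.inter hU1, ⟨z', hz', hzU1⟩, inter_subset_left,
      hOo.inter hU2, ⟨z, hz, hzU2⟩, inter_subset_left,
      (hU12.mono inter_subset_right inter_subset_right)⟩
  choose sp hsp1 hsp2 hsp3 hsp4 hsp5 hsp6 hsp7 using hsplit
  let room : ℕ → {O : Set X // IsOpen O ∧ O.Nonempty ∧ O ⊆ A₀} := fun n =>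
    Nat.rec ⟨A₀, hA₀o, hA₀n, Subset.rfl⟩
      (fun _ prev => ⟨(sp prev).2, hsp4 prev, hsp5 prev, (hsp6 prev).trans prev.2.2.2⟩) n
  let u : ℕ → Set X := fun n => (sp (room n)).1
  have hroomstep : ∀ n, (room (n+1)).1 ⊆ (room n).1 := fun n => hsp6 (room n)
  have hroommono : ∀ {a b : ℕ}, a ≤ b → (room b).1 ⊆ (room a).1 := by
    intro a b hab
    induction b with
    | zero => simp_all
    | succ b ih =>
      rcases Nat.lt_or_ge a (b+1) with hlt | hge
      · exact (hroomstep b).trans (ih (by omega))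
      · have : a = b + 1 := by omega
        rw [this]
  have huo : ∀ n, IsOpen (u n) := fun n => hsp1 (room n)
  have hun : ∀ n, (u n).Nonempty := fun n => hsp2 (room n)
  have huA : ∀ n, u n ⊆ A₀ := fun n => (hsp3 (room n)).trans (room n).2.2.2
  have hudisj : ∀ {a b : ℕ}, a ≠ b → Disjoint (u a) (u b) := by
    have key : ∀ a b, a < b → Disjoint (u a) (u b) := by
      intro a b hab
      have h1 : u b ⊆ (room (a+1)).1 := (hsp3 (room b)).trans (hroommono (show a+1 ≤ b by omega))
      have h2 : Disjoint (u a) (room (a+1)).1 := hsp7 (room a)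
      exact h2.mono_right h1
    intro a b hab
    rcases Nat.lt_or_ge a b with h | h
    · exact key a b h
    · exact (key b a (by omega)).symm
  -- pick the escaping points
  have hqex : ∀ j, (closure (u j) ∩ (W j)ᶜ).Nonempty :=
    fun j => hwild (u j) (huo j) (hun j) (huA j) j
  choose q hqcl hqW using hqex
  -- q j is not isolated
  have hqni : ∀ j (O : Set X), IsOpen O → q j ∈ O → ∃ z ∈ O, z ≠ q j := by
    intro j O hOo hqO
    have hOu : (O ∩ u j).Nonempty := by
      have := (mem_closure_iff.mp (hqcl j)) O hOo hqO
      exact this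
    obtain ⟨w, hwO, hwu⟩ := hOu
    rcases em (w = q j) with hw | hw
    · -- q j ∈ u j; use htwo on O ∩ u j
      rw [hw] at hwu
      obtain ⟨z, hz, hzq⟩ := htwo (O ∩ u j) (hOo.inter (huo j))
        ⟨q j, hqO, hwu⟩ (inter_subset_right.trans (huA j)) (q j) ⟨hqO, hwu⟩
      exact ⟨z, hz.1, hzq⟩
    · exact ⟨w, hwO, hw⟩
  -- per-block member construction
  have hstep2 : ∀ (j r : ℕ) (R : {R : Set X // IsOpen R ∧ q j ∈ R}),
      ∃ mV : Set X, IsOpen mV ∧ mV.Nonempty ∧ mV ⊆ BB (q j) r ∧ mV ⊆ u j ∧ mV ⊆ R.1 ∧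
        q j ∉ closure mV := by
    rintro j r ⟨R, hRo, hqR⟩
    set N := BB (q j) r ∩ R with hN
    have hNo : IsOpen N := (hBBo _ r).inter hRo
    have hqN : q j ∈ N := ⟨hBBx _ r, hqR⟩
    have hregion : (N ∩ u j).Nonempty := (mem_closure_iff.mp (hqcl j)) N hNo hqN
    have : ∃ z ∈ N ∩ u j, z ≠ q j := by
      rcases em (q j ∈ N ∩ u j) with hmem | hmem
      · obtain ⟨z, hz, hzq⟩ := hqni j (N ∩ u j) (hNo.inter (huo j)) hmem
        exact ⟨z, hz, hzq⟩
      · obtain ⟨z, hz⟩ := hregion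
        exact ⟨z, hz, fun h => hmem (h ▸ hz)⟩
    obtain ⟨z, hzmem, hzq⟩ := this
    obtain ⟨Z, Q, hZo, hQo, hzZ, hqQ, hZQ⟩ := t2_separation hzq
    refine ⟨(N ∩ u j) ∩ Z, ((hNo.inter (huo j)).inter hZo), ⟨z, hzmem, hzZ⟩,
      (inter_subset_left.trans (inter_subset_left.trans inter_subset_left)), ?_, ?_, ?_⟩
    · exact inter_subset_left.trans inter_subset_right
    · intro x hx
      exact ((inter_subset_left.trans inter_subset_left) hx).2
    · intro hcl
      obtain ⟨y, hy1, hy2⟩ := (mem_closure_iff.mp hcl) Q hQo hqQ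
      exact (hZQ.ne_of_mem hy2.2 hy1) rfl
  choose mf hmf1 hmf2 hmf3 hmf4 hmf5 hmf6 using hstep2
  let stJ : ∀ j, ℕ → {R : Set X // IsOpen R ∧ q j ∈ R} := fun j r =>
    Nat.rec ⟨univ, isOpen_univ, trivial⟩
      (fun r' prev => ⟨prev.1 ∩ (closure (mf j r' prev))ᶜ,
        prev.2.1.inter isClosed_closure.isOpen_compl, prev.2.2, hmf6 j r' prev⟩) r
  let mem : ℕ → ℕ → Set X := fun j r => mf j r (stJ j r)
  have hstJstep : ∀ j r, (stJ j (r+1)).1 ⊆ (stJ j r).1 := fun j r => inter_subset_left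
  have hstJmono : ∀ j {a b : ℕ}, a ≤ b → (stJ j b).1 ⊆ (stJ j a).1 := by
    intro j a b hab
    induction b with
    | zero => simp_all
    | succ b ih =>
      rcases Nat.lt_or_ge a (b+1) with hlt | hge
      · exact (hstJstep j b).trans (ih (by omega))
      · have : a = b + 1 := by omega
        rw [this]
  have hmemdisjJ : ∀ j {a b : ℕ}, a < b → Disjoint (mem j a) (mem j b) := by
    intro j a b hab
    have h1 : mem j b ⊆ (stJ j (a+1)).1 := (hmf5 j b (stJ j b)).trans (hstJmono j (show a+1 ≤ b by omega))
    have h2 : (stJ j (a+1)).1 ⊆ (closure (mem j a))ᶜ := inter_subset_right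
    refine Disjoint.mono_right (h1.trans h2) ?_
    exact disjoint_compl_right.mono_left subset_closure
  -- conclude with endgame
  refine endgame hcc W hWo hWmono hWcover q hqW (fun j => BB (q j)) (fun j => hBBanti (q j))
    (fun j => hBBsub (q j)) mem (fun j r => hmf1 j r _) (fun j r => hmf2 j r _)
    (fun j r => hmf3 j r _) ?_
  intro j r j' r' hne
  rcases em (j = j') with rfl | hjj
  · rcases Nat.lt_trichotomy r r' with h | h | h
    · exact hmemdisjJ j h
    · exact absurd (by rw [h]) hne
    · exact (hmemdisjJ j h).symm
  · exact (hudisj hjj).mono (hmf4 j r _) (hmf4 j' r' _)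

end Aux

theorem stmt10 {X : Type*} [TopologicalSpace X] [T2Space X] [HereditarilyLindelofSpace X]
    (hcc : CellularCompact X) : CompactSpace X := by
  classical
  by_contra hnc
  have hK : ¬ IsCompact (univ : Set X) := fun h => hnc ⟨h⟩
  obtain ⟨W, hWo, hWmono, hWcover, hWne⟩ := exists_bad_cover hK
  choose BB hBBo hBBx hBBanti hBBsub using fun x : X => exists_closed_pseudobase x
  by_cases hcl : ∀ A : Set X, IsOpen A → A.Nonempty →
      ∃ V M, IsOpen V ∧ V.Nonempty ∧ V ⊆ A ∧ closure V ∩ (W M)ᶜ = ∅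
  · exact clean_case hcc W hWo hWmono hWcover hWne BB hBBo hBBx hBBanti hBBsub hcl
  · push_neg at hcl
    obtain ⟨A₀, hA₀o, hA₀n, hw⟩ := hcl
    refine wild_case hcc W hWo hWmono hWcover BB hBBo hBBx hBBanti hBBsub A₀ hA₀o hA₀n ?_
    intro V hVo hVn hVA M
    exact hw V M hVo hVn hVA
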